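/- Let v ≥ 0 be a real number and let n ∈ ℕ₀. Then (v)_n / n! ≤ (1+n)^v. -/
import Mathlib

/-- The Pochhammer symbol `(x)_n = x (x+1) ⋯ (x+n-1)` for real `x`. -/
noncomputable def pochR (x : ℝ) (n : ℕ) : ℝ := ∏ i ∈ Finset.range n, (x + i)

theorem pochR_div_factorial_le (v : ℝ) (hv : 0 ≤ v) (n : ℕ) :
    pochR v n / n.factorial ≤ (1 + (n : ℝ)) ^ v := by
  rcases le_or_gt v 1 with h1 | h1
  · have hle : pochR v n ≤ n.factorial := by
      induction n with
      | zero => simp [pochR]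
      | succ n ih =>
        have hs : pochR v (n + 1) = pochR v n * (v + n) := Finset.prod_range_succ _ n
        rw [hs, Nat.factorial_succ]
        push_cast
        rw [mul_comm ((n:ℝ)+1)]
        have hp : 0 ≤ pochR v n := Finset.prod_nonneg fun i _ => by positivity
        have : v + (n : ℝ) ≤ (n : ℝ) + 1 := by linarith
        exact mul_le_mul ih this (by positivity) (Nat.cast_nonneg _)
    have h2 : pochR v n / n.factorial ≤ 1 := by
      rw [div_le_one (by positivity)]; exact hle
    exact h2.trans (Real.one_le_rpow (by linarith [Nat.cast_nonneg (α := ℝ) n]) hv)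
  · induction n with
    | zero => simp [pochR]
    | succ n ih =>
      have hstep : pochR v (n + 1) = pochR v n * (v + n) := Finset.prod_range_succ _ n
      have hn1 : (0:ℝ) < (n:ℝ) + 1 := by positivity
      have key : (v + n) / ((n:ℝ) + 1) ≤ (((n:ℝ) + 2) / ((n:ℝ) + 1)) ^ v := by
        have hpos : (0:ℝ) ≤ 1 / ((n:ℝ) + 1) := by positivity
        have hb := one_add_mul_self_le_rpow_one_add
          (s := 1 / ((n:ℝ) + 1)) (by linarith) (le_of_lt h1)
        have h2 : ((n:ℝ) + 2) / ((n:ℝ) + 1) = 1 + 1 / ((n:ℝ) + 1) := by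
          field_simp; ring
        rw [h2]
        refine le_trans ?_ hb
        rw [div_le_iff₀ hn1]
        have hc : (1 + v * (1 / ((n:ℝ) + 1))) * ((n:ℝ) + 1) = (n:ℝ) + 1 + v := by
          field_simp
        rw [hc]
        linarith
      have hLHS : pochR v (n+1) / (n+1).factorial
          = (pochR v n / n.factorial) * ((v + n) / ((n:ℝ) + 1)) := by
        rw [hstep, Nat.factorial_succ, Nat.cast_mul, div_mul_div_comm]
        congr 1
        push_cast
        ring
      rw [hLHS]
      have hp : 0 ≤ pochR v n / n.factorial := by
        have : 0 ≤ pochR v n := Finset.prod_nonneg fun i _ => by positivity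
        positivity
      have hvn : 0 ≤ (v + (n:ℝ)) / ((n:ℝ) + 1) := by
        have := Nat.cast_nonneg (α := ℝ) n; positivity
      calc pochR v n / n.factorial * ((v + n) / ((n:ℝ) + 1))
          ≤ (1 + (n:ℝ)) ^ v * ((((n:ℝ) + 2) / ((n:ℝ) + 1)) ^ v) :=
            mul_le_mul ih key hvn (Real.rpow_nonneg (by linarith [Nat.cast_nonneg (α := ℝ) n]) _)
        _ = ((1 + (n:ℝ)) * (((n:ℝ) + 2) / ((n:ℝ) + 1))) ^ v := by
            rw [← Real.mul_rpow (by linarith [Nat.cast_nonneg (α := ℝ) n]) (by positivity)]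
        _ = (1 + ((n:ℕ)+1 : ℕ) : ℝ) ^ v := by
            congr 1
            push_cast
            field_simp
            ring
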